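/- (Calabi) Let n ≥ 2 and let q_1, q_2 be real quadratic forms on ℝ^{n+1}, with projective zero sets Γ_i = {[x] ∈ ℝP^n : q_i(x) = 0}. Then Γ_1 ∩ Γ_2 = ∅ if and only if there exist real numbers (λ_1, λ_2) ≠ (0,0) such that the quadratic form λ_1 q_1 + λ_2 q_2 is positive definite. Equivalently: Γ_1 ∩ Γ_2 ≠ ∅ if and only if no nontrivial linear combination λ_1 q_1 + λ_2 q_2 is positive definite. -/

import Mathlib

noncomputable section

/-- The quotient topology on a projectivization. -/
instance {K V : Type*} [DivisionRing K] [AddCommGroup V] [Module K V] [TopologicalSpace V] :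
    TopologicalSpace (Projectivization K V) :=
  instTopologicalSpaceQuotient

/-- The projective zero set `{[x] ∈ ℝPⁿ : q x = 0}` of a real quadratic form `q` on
`ℝ^{n+1}`. -/
def projZeroSet {n : ℕ} (q : QuadraticForm ℝ (Fin (n + 1) → ℝ)) :
    Set (Projectivization ℝ (Fin (n + 1) → ℝ)) :=
  {p | q p.rep = 0}

abbrev VV (n : ℕ) := Fin (n + 1) → ℝ

lemma bilin_continuous {n : ℕ} (B : (VV n) →ₗ[ℝ] (VV n) →ₗ[ℝ] ℝ) :
    Continuous fun x => B x x := by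
  have hL : Continuous fun x : VV n => (LinearMap.toContinuousLinearMap (B x) : (VV n) →L[ℝ] ℝ) :=
    (LinearMap.toContinuousLinearMap.toLinearMap.comp B).continuous_of_finiteDimensional
  exact isBoundedBilinearMap_apply.continuous.comp₂ hL continuous_id

lemma qf_continuous {n : ℕ} (q : QuadraticForm ℝ (VV n)) : Continuous fun x => q x := by
  have h2 : ∀ x : VV n, q x = (1/2) * (QuadraticMap.polarBilin q x x) := by
    intro x
    have h := QuadraticMap.polar_self q x
    rw [QuadraticMap.polarBilin_apply_apply] at *
    rw [h]; push_cast; ring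
  simp_rw [h2]
  exact continuous_const.mul (bilin_continuous _)
open QuadraticMap

lemma map_comb {n : ℕ} (p : QuadraticForm ℝ (VV n)) (s t : ℝ) (a b : VV n) :
    p (s • a + t • b) = s*s*p a + t*t*p b + s*t*polar p a b := by
  have h : p (s • a + t • b) = p (s•a) + p (t•b) + polar p (s•a) (t•b) := by
    simp [polar]
  rw [h, polar_smul_left, polar_smul_right, QuadraticMap.map_smul, QuadraticMap.map_smul]
  simp only [smul_eq_mul]; ring

lemma map_comb3 {n : ℕ} (p : QuadraticForm ℝ (VV n)) (s t u : ℝ) (a b c : VV n) :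
    p (s • a + t • b + u • c) = s*s*p a + t*t*p b + u*u*p c + s*t*polar p a b
      + s*u*polar p a c + t*u*polar p b c := by
  have h : p (s • a + t • b + u • c) = p (s•a + t•b) + p (u•c) + polar p (s•a+t•b) (u•c) := by
    simp [polar]
  rw [h, map_comb, polar_add_left, polar_smul_left, polar_smul_left, polar_smul_right,
    polar_smul_right, QuadraticMap.map_smul]
  simp only [smul_eq_mul]; ring

lemma seg_lemma {n : ℕ} (p r : QuadraticForm ℝ (VV n)) (a b : VV n)
    (hind : ∀ s t : ℝ, s • a + t • b = 0 → s = 0 ∧ t = 0)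
    (hpa : p a = 0) (hpb : p b = 0) (hpol : polar p a b = 0)
    (hra : 0 < r a) (hrb : r b < 0) :
    ∃ z : VV n, z ≠ 0 ∧ p z = 0 ∧ r z = 0 := by
  set φ : ℝ → VV n := fun t => (1 - t) • a + t • b with hφdef
  have hφ : Continuous φ := by fun_prop
  have hg : ContinuousOn (fun t => r (φ t)) (Set.Icc 0 1) :=
    ((qf_continuous r).comp hφ).continuousOn
  have h01 : φ 0 = a := by simp [hφdef]
  have h11 : φ 1 = b := by simp [hφdef]
  have h0 : (0:ℝ) ∈ Set.Icc (r (φ 1)) (r (φ 0)) := by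
    rw [h01, h11]; exact ⟨le_of_lt hrb, le_of_lt hra⟩
  obtain ⟨t, ht, hrt⟩ := intermediate_value_Icc' (by norm_num : (0:ℝ) ≤ 1) hg h0
  refine ⟨φ t, ?_, ?_, hrt⟩
  · intro hz
    obtain ⟨h1, h2⟩ := hind _ _ hz
    rw [h2] at h1; norm_num at h1
  · rw [hφdef]; simp only []
    rw [map_comb, hpa, hpb, hpol]; ring

-- dependent pair forces contradiction with opposite signs
lemma dep_aux {n : ℕ} (r : QuadraticForm ℝ (VV n)) (x y : VV n) (hx : x ≠ 0)
    (hy : y ≠ 0) (hrx : 0 < r x) (hry : r y < 0)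
    (s t : ℝ) (h : s • x + t • y = 0) : s = 0 ∧ t = 0 := by
  have ht : t = 0 := by
    by_contra ht
    have hyx : y = (-s/t) • x := by
      have h1 : t • y = -(s • x) := by
        rw [eq_neg_iff_add_eq_zero, add_comm]; exact h
      have := congrArg (fun v => t⁻¹ • v) h1
      simp only [smul_smul, inv_mul_cancel₀ ht, one_smul] at this
      rw [this]; rw [← neg_smul, smul_smul]; congr 1; field_simp
    have : r y = ((-s/t) * (-s/t)) • r x := by rw [hyx, QuadraticMap.map_smul]
    rw [smul_eq_mul] at this
    nlinarith [sq_nonneg (-s/t), this]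
  refine ⟨?_, ht⟩
  rw [ht, zero_smul, add_zero, smul_eq_zero] at h
  exact h.resolve_right hx

lemma key_lemma {n : ℕ} (hn : 2 ≤ n) (p r : QuadraticForm ℝ (VV n)) (x y : VV n)
    (hx : x ≠ 0) (hy : y ≠ 0) (hpx : p x = 0) (hpy : p y = 0)
    (hrx : 0 < r x) (hry : r y < 0) :
    ∃ z : VV n, z ≠ 0 ∧ p z = 0 ∧ r z = 0 := by
  have hindxy : ∀ s t : ℝ, s • x + t • y = 0 → s = 0 ∧ t = 0 :=
    dep_aux r x y hx hy hrx hry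
  by_cases hc : polar p x y = 0
  · exact seg_lemma p r x y hindxy hpx hpy hc hrx hry
  -- find w with polar p x w = polar p y w = 0
  set L : (VV n) →ₗ[ℝ] ℝ × ℝ :=
    ((QuadraticMap.polarBilin p) x).prod ((QuadraticMap.polarBilin p) y) with hLdef
  have hker : LinearMap.ker L ≠ ⊥ := by
    intro hbot
    have hinj : Function.Injective L := LinearMap.ker_eq_bot.mp hbot
    have h1 : Module.finrank ℝ (VV n) ≤ Module.finrank ℝ (ℝ × ℝ) :=
      LinearMap.finrank_le_finrank_of_injective hinj
    rw [Module.finrank_fin_fun, Module.finrank_prod, Module.finrank_self] at h1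
    omega
  obtain ⟨w, hwmem, hw⟩ := Submodule.exists_mem_ne_zero_of_ne_bot hker
  rw [LinearMap.mem_ker, hLdef] at hwmem
  have hxw : polar p x w = 0 := congrArg Prod.fst hwmem
  have hyw : polar p y w = 0 := congrArg Prod.snd hwmem
  have hwx : ∀ k : ℝ, w ≠ k • x := by
    intro k hk
    apply hc
    have : polar p y w = k * polar p y x := by
      rw [hk, polar_smul_right, smul_eq_mul]
    rw [hyw] at this
    have hk0 : k ≠ 0 := by rintro rfl; simp at hk; exact hw hk
    rw [polar_comm] at this
    field_simp at this
    rcases mul_eq_zero.mp (by linarith [this] : k * polar p x y = 0) with h | h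
    · exact absurd h hk0
    · exact h
  have hwy : ∀ k : ℝ, w ≠ k • y := by
    intro k hk
    apply hc
    have : polar p x w = k * polar p x y := by
      rw [hk, polar_smul_right, smul_eq_mul]
    rw [hxw] at this
    have hk0 : k ≠ 0 := by rintro rfl; simp at hk; exact hw hk
    field_simp at this
    rcases mul_eq_zero.mp (by linarith [this] : k * polar p x y = 0) with h | h
    · exact absurd h hk0
    · exact h
  by_cases hd : p w = 0
  · rcases lt_trichotomy (r w) 0 with h | h | h
    · -- segment x → w
      refine seg_lemma p r x w ?_ hpx hd hxw hrx h
      intro s t hst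
      have ht : t = 0 := by
        by_contra ht
        exact hwx (-s/t) (by
          have h1 : t • w = -(s • x) := by rw [eq_neg_iff_add_eq_zero, add_comm]; exact hst
          have := congrArg (fun v => t⁻¹ • v) h1
          simp only [smul_smul, inv_mul_cancel₀ ht, one_smul] at this
          rw [this, ← neg_smul, smul_smul]; congr 1; field_simp)
      refine ⟨?_, ht⟩
      rw [ht, zero_smul, add_zero, smul_eq_zero] at hst
      exact hst.resolve_right hx
    · exact ⟨w, hw, hd, h⟩
    · -- segment w → y
      refine seg_lemma p r w y ?_ hd hpy (by rw [polar_comm]; exact hyw) h hry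
      intro s t hst
      have hs : s = 0 := by
        by_contra hs
        exact hwy (-t/s) (by
          have h1 : s • w = -(t • y) := by rw [eq_neg_iff_add_eq_zero]; exact hst
          have := congrArg (fun v => s⁻¹ • v) h1
          simp only [smul_smul, inv_mul_cancel₀ hs, one_smul] at this
          rw [this, ← neg_smul, smul_smul]; congr 1; field_simp)
      refine ⟨hs, ?_⟩
      rw [hs, zero_smul, zero_add, smul_eq_zero] at hst
      exact hst.resolve_right hy
  · -- p w ≠ 0 : three-dimensional path
    have polar_comb3 : ∀ (v : VV n) (α β δ : ℝ),
        polar p v (α • x + β • y + δ • w)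
          = α * polar p v x + β * polar p v y + δ * polar p v w := by
      intro v α β δ
      rw [polar_add_right, polar_add_right, polar_smul_right, polar_smul_right,
        polar_smul_right]
      simp only [smul_eq_mul]
    set e : ℝ := polar p x y / p w with hedef
    have he : e ≠ 0 := div_ne_zero hc hd
    set s : ℝ := if 0 < e then -1 else 1 with hsdef
    have hs0 : s ≠ 0 := by rw [hsdef]; split <;> norm_num
    have hs2 : s * s = 1 := by rw [hsdef]; split <;> norm_num
    have hse : -s * e = |e| := by
      rcases lt_trichotomy e 0 with h | h | h
      · rw [hsdef, if_neg (by linarith), abs_of_neg h]; ring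
      · exact absurd h he
      · rw [hsdef, if_pos h, abs_of_pos h]; ring
    set γ : ℝ → ℝ := fun t => Real.sqrt (|e| * (Real.cos t * Real.sin t)) with hγdef
    set z : ℝ → VV n := fun t => Real.cos t • x + (s * Real.sin t) • y + γ t • w with hzdef
    have hzc : Continuous z := by
      apply (Continuous.add (Continuous.add ?_ ?_) ?_)
      · exact Real.continuous_cos.smul continuous_const
      · exact (continuous_const.mul Real.continuous_sin).smul continuous_const
      · exact (Real.continuous_sqrt.comp
          (continuous_const.mul (Real.continuous_cos.mul Real.continuous_sin))).smul
          continuous_const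
    have hγsq : ∀ t ∈ Set.Icc 0 (Real.pi/2),
        γ t * γ t = |e| * (Real.cos t * Real.sin t) := by
      intro t ht
      have hcos : 0 ≤ Real.cos t :=
        Real.cos_nonneg_of_mem_Icc ⟨by linarith [ht.1, Real.pi_pos], ht.2⟩
      have hsin : 0 ≤ Real.sin t :=
        Real.sin_nonneg_of_nonneg_of_le_pi ht.1 (by linarith [ht.2, Real.pi_pos])
      rw [hγdef]
      exact Real.mul_self_sqrt (by positivity)
    have hpz : ∀ t ∈ Set.Icc 0 (Real.pi/2), p (z t) = 0 := by
      intro t ht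
      rw [hzdef]
      simp only []
      rw [map_comb3, hpx, hpy, hxw, hyw]
      have h2 := hγsq t ht
      have h3 : γ t * γ t * p w = |e| * (Real.cos t * Real.sin t) * p w := by rw [h2]
      have h4 : |e| * p w = -s * polar p x y := by
        rw [← hse, hedef]; field_simp
      calc Real.cos t * Real.cos t * 0 + s * Real.sin t * (s * Real.sin t) * 0
            + γ t * γ t * p w + Real.cos t * (s * Real.sin t) * polar p x y
            + Real.cos t * γ t * 0 + s * Real.sin t * γ t * 0
          = (|e| * p w) * (Real.cos t * Real.sin t)
            + Real.cos t * (s * Real.sin t) * polar p x y := by rw [h3]; ring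
        _ = 0 := by rw [h4]; ring
    have hz0 : z 0 = x := by
      rw [hzdef, hγdef]; simp
    have hz1 : z (Real.pi/2) = s • y := by
      rw [hzdef, hγdef]; simp
    have hrz1 : r (z (Real.pi/2)) = r y := by
      rw [hz1, QuadraticMap.map_smul, smul_eq_mul, hs2, one_mul]
    have hg : ContinuousOn (fun t => r (z t)) (Set.Icc 0 (Real.pi/2)) :=
      ((qf_continuous r).comp hzc).continuousOn
    have h0mem : (0:ℝ) ∈ Set.Icc (r (z (Real.pi/2))) (r (z 0)) := by
      rw [hz0, hrz1]; exact ⟨le_of_lt hry, le_of_lt hrx⟩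
    obtain ⟨t₀, ht₀, hrt₀⟩ :=
      intermediate_value_Icc' (by positivity : (0:ℝ) ≤ Real.pi/2) hg h0mem
    refine ⟨z t₀, ?_, hpz t₀ ht₀, hrt₀⟩
    intro hzero
    have hzt : z t₀ = Real.cos t₀ • x + (s * Real.sin t₀) • y + γ t₀ • w := rfl
    have hcos0 : Real.cos t₀ = 0 := by
      have h1 := polar_comb3 y (Real.cos t₀) (s * Real.sin t₀) (γ t₀)
      rw [← hzt, hzero, polar_zero_right, polar_self, hpy, hyw, polar_comm] at h1
      simp only [smul_zero, mul_zero, add_zero, smul_eq_mul] at h1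
      rcases mul_eq_zero.mp h1.symm with h | h
      · exact h
      · exact absurd h hc
    have hsin0 : Real.sin t₀ = 0 := by
      have h1 := polar_comb3 x (Real.cos t₀) (s * Real.sin t₀) (γ t₀)
      rw [← hzt, hzero, polar_zero_right, polar_self, hpx, hxw] at h1
      simp only [smul_zero, mul_zero, zero_add, add_zero, smul_eq_mul] at h1
      rcases mul_eq_zero.mp h1.symm with h | h
      · rcases mul_eq_zero.mp h with h' | h'
        · exact absurd h' hs0
        · exact h'
      · exact absurd h hc
    have := Real.sin_sq_add_cos_sq t₀
    rw [hsin0, hcos0] at this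
    norm_num at this

lemma sq_sum_pos {a₀ b₀ : ℝ} (h : ¬(a₀ = 0 ∧ b₀ = 0)) : 0 < a₀ * a₀ + b₀ * b₀ := by
  rcases not_and_or.mp h with h | h
  · nlinarith [mul_self_nonneg b₀, (mul_self_pos).mpr h]
  · nlinarith [mul_self_nonneg a₀, (mul_self_pos).mpr h]

lemma main_construct {n : ℕ} (hn : 2 ≤ n) (q₁ q₂ : QuadraticForm ℝ (VV n))
    (H : ∀ x : VV n, x ≠ 0 → ¬(q₁ x = 0 ∧ q₂ x = 0)) :
    ∃ a b : ℝ, ¬(a = 0 ∧ b = 0) ∧ ∀ x : VV n, x ≠ 0 → 0 < a * q₁ x + b * q₂ x := by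
  by_cases hA : ∃ x y : VV n, x ≠ 0 ∧ y ≠ 0 ∧
      ∃ t : ℝ, 0 < t ∧ q₁ y = -t * q₁ x ∧ q₂ y = -t * q₂ x
  · exfalso
    obtain ⟨x, y, hx, hy, t, ht, h1, h2⟩ := hA
    set a₀ := q₁ x with ha₀
    set b₀ := q₂ x with hb₀
    have hab : 0 < a₀ * a₀ + b₀ * b₀ := sq_sum_pos (H x hx)
    set p : QuadraticForm ℝ (VV n) := b₀ • q₁ - a₀ • q₂ with hpdef
    set r : QuadraticForm ℝ (VV n) := a₀ • q₁ + b₀ • q₂ with hrdef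
    have happ : ∀ v : VV n, p v = b₀ * q₁ v - a₀ * q₂ v := by
      intro v; rw [hpdef]
      simp [QuadraticMap.sub_apply, QuadraticMap.smul_apply, smul_eq_mul]
    have happr : ∀ v : VV n, r v = a₀ * q₁ v + b₀ * q₂ v := by
      intro v; rw [hrdef]
      simp [QuadraticMap.add_apply, QuadraticMap.smul_apply, smul_eq_mul]
    have hpx : p x = 0 := by rw [happ, ← ha₀, ← hb₀]; ring
    have hpy : p y = 0 := by rw [happ, h1, h2]; ring
    have hrx : 0 < r x := by rw [happr, ← ha₀, ← hb₀]; exact hab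
    have hry : r y < 0 := by rw [happr, h1, h2]; nlinarith
    obtain ⟨z, hz, hpz, hrz⟩ := key_lemma hn p r x y hx hy hpx hpy hrx hry
    rw [happ] at hpz
    rw [happr] at hrz
    have hne : a₀ * a₀ + b₀ * b₀ ≠ 0 := ne_of_gt hab
    refine H z hz ⟨?_, ?_⟩
    · have e1 : q₁ z * (a₀ * a₀ + b₀ * b₀) = 0 := by linear_combination a₀ * hrz + b₀ * hpz
      exact (mul_eq_zero.mp e1).resolve_right hne
    · have e1 : q₂ z * (a₀ * a₀ + b₀ * b₀) = 0 := by linear_combination b₀ * hrz - a₀ * hpz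
      exact (mul_eq_zero.mp e1).resolve_right hne
  · -- Case B: no antipodal pair
    push_neg at hA
    set f : VV n → ℂ := fun v => (q₁ v : ℂ) + (q₂ v : ℂ) * Complex.I with hfdef
    have hfre : ∀ v, (f v).re = q₁ v := by intro v; simp [hfdef]
    have hfim : ∀ v, (f v).im = q₂ v := by intro v; simp [hfdef]
    have hfc : Continuous f := by
      apply Continuous.add
      · exact Complex.continuous_ofReal.comp (qf_continuous q₁)
      · exact (Complex.continuous_ofReal.comp (qf_continuous q₂)).mul continuous_const
    have hf0 : ∀ v : VV n, v ≠ 0 → f v ≠ 0 := by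
      intro v hv hfv
      refine H v hv ⟨?_, ?_⟩
      · rw [← hfre v, hfv]; simp
      · rw [← hfim v, hfv]; simp
    set S := Metric.sphere (0 : VV n) 1 with hSdef
    have hSne : S.Nonempty := NormedSpace.sphere_nonempty.mpr zero_le_one
    obtain ⟨x₀, hx₀S⟩ := hSne
    have hSnorm : ∀ v ∈ S, ‖v‖ = 1 := by
      intro v hv; rwa [hSdef, mem_sphere_zero_iff_norm] at hv
    have hSne0 : ∀ v ∈ S, v ≠ (0 : VV n) := by
      intro v hv h0
      have := hSnorm v hv; rw [h0] at this; simp at this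
    have hx₀ : x₀ ≠ 0 := hSne0 x₀ hx₀S
    set c₀ := f x₀ with hc₀def
    have hc₀ : c₀ ≠ 0 := hf0 x₀ hx₀
    -- no x on the sphere maps to a negative multiple of c₀
    have hnotneg : ∀ v : VV n, v ≠ 0 → ∀ t : ℝ, t < 0 → f v ≠ (t : ℂ) * c₀ := by
      intro v hv t htneg heq
      have h1 : q₁ v = -(-t) * q₁ x₀ := by
        rw [← hfre v, heq]
        simp [Complex.mul_re, hfre, hfim, hc₀def]
        try ring
      have h2 : q₂ v = -(-t) * q₂ x₀ := by
        rw [← hfim v, heq]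
        simp [Complex.mul_im, hfre, hfim, hc₀def]
        try ring
      exact hA x₀ v hx₀ hv (-t) (by linarith) h1 h2
    have hslit : ∀ v ∈ S, f v / c₀ ∈ Complex.slitPlane := by
      intro v hvS
      rw [Complex.mem_slitPlane_iff]
      by_contra hcon
      push_neg at hcon
      obtain ⟨hre, him⟩ := hcon
      have hveq : f v / c₀ = (((f v / c₀).re : ℝ) : ℂ) := by
        apply Complex.ext
        · simp
        · simp [him]
      have hfv : f v = (((f v / c₀).re : ℝ) : ℂ) * c₀ := by
        rw [← hveq]; field_simp
      rcases eq_or_lt_of_le hre with h0 | hneg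
      · rw [h0] at hfv
        norm_num at hfv
        exact hf0 v (hSne0 v hvS) hfv
      · exact hnotneg v (hSne0 v hvS) _ hneg hfv
    set θ : VV n → ℝ := fun v => (f v / c₀).arg with hθdef
    have hθcont : ContinuousOn θ S := by
      intro v hv
      have h1 : ContinuousAt (fun w : VV n => f w / c₀) v := (hfc.div_const c₀).continuousAt
      have h2 : ContinuousAt Complex.arg (f v / c₀) := Complex.continuousAt_arg (hslit v hv)
      exact ContinuousAt.continuousWithinAt (ContinuousAt.comp (x := v) h2 h1 :
        ContinuousAt (Complex.arg ∘ fun w => f w / c₀) v)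
    have hScomp : IsCompact S := isCompact_sphere 0 1
    have hSconn : IsConnected S := by
      apply isConnected_sphere ?_ 0 zero_le_one
      have hrk : Module.rank ℝ (VV n) = ((n + 1 : ℕ) : Cardinal) := by
        rw [← Module.finrank_eq_rank]
        norm_cast
        exact Module.finrank_fin_fun ℝ
      rw [hrk]
      exact_mod_cast (by omega : 1 < n + 1)
    set K := θ '' S with hKdef
    have hKcomp : IsCompact K := hScomp.image_of_continuousOn hθcont
    have hKconn : IsConnected K := hSconn.image θ hθcont
    have hKne : K.Nonempty := hKconn.nonempty
    set m := sInf K with hmdef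
    set M := sSup K with hMdef
    have hmK : m ∈ K := hKcomp.sInf_mem hKne
    have hMK : M ∈ K := hKcomp.sSup_mem hKne
    have hbddb : ∀ u ∈ K, m ≤ u := fun u hu => csInf_le hKcomp.bddBelow hu
    have hbdda : ∀ u ∈ K, u ≤ M := fun u hu => le_csSup hKcomp.bddAbove hu
    -- two sphere points whose angles differ by π give an antipodal pair: impossible
    have hpair : ∀ x₁ ∈ S, ∀ x₂ ∈ S, θ x₂ = θ x₁ + Real.pi → False := by
      intro x₁ h1S x₂ h2S heq
      set z₁ := f x₁ / c₀ with hz₁def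
      set z₂ := f x₂ / c₀ with hz₂def
      have hz₁ : z₁ ≠ 0 := div_ne_zero (hf0 x₁ (hSne0 x₁ h1S)) hc₀
      have hz₂ : z₂ ≠ 0 := div_ne_zero (hf0 x₂ (hSne0 x₂ h2S)) hc₀
      have e1 := Complex.norm_mul_exp_arg_mul_I z₁
      have e2 := Complex.norm_mul_exp_arg_mul_I z₂
      have habs1 : (0:ℝ) < ‖z₁‖ := norm_pos_iff.mpr hz₁
      have habs2 : (0:ℝ) < ‖z₂‖ := norm_pos_iff.mpr hz₂
      set tt : ℝ := ‖z₂‖ / ‖z₁‖ with httdef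
      have htt : 0 < tt := div_pos habs2 habs1
      have hz2eq : z₂ = -(tt:ℂ) * z₁ := by
        rw [← e1, ← e2]
        have hargeq : (z₂.arg : ℂ) = (z₁.arg : ℂ) + (Real.pi : ℂ) := by
          have : z₂.arg = θ x₂ := rfl
          rw [this, heq]; push_cast; ring
        rw [hargeq, add_mul, Complex.exp_add, Complex.exp_pi_mul_I]
        rw [httdef]
        have habs1' : ((‖z₁‖ : ℝ) : ℂ) ≠ 0 := by exact_mod_cast ne_of_gt habs1
        rw [Complex.ofReal_div]
        have hinv : ((‖z₁‖ : ℝ) : ℂ) * (((‖z₁‖ : ℝ) : ℂ))⁻¹ = 1 :=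
          mul_inv_cancel₀ habs1'
        linear_combination (((‖z₂‖ : ℝ) : ℂ)
          * Complex.exp ((z₁.arg : ℂ) * Complex.I)) * hinv
      have hfx2 : f x₂ = ((-tt : ℝ) : ℂ) * f x₁ := by
        have h1 : f x₂ = z₂ * c₀ := by rw [hz₂def]; field_simp
        have h2 : f x₁ = z₁ * c₀ := by rw [hz₁def]; field_simp
        rw [h1, h2, hz2eq]; push_cast; ring
      have hq1 : q₁ x₂ = -tt * q₁ x₁ := by
        rw [← hfre x₂, hfx2]
        simp [Complex.mul_re, hfre]
      have hq2 : q₂ x₂ = -tt * q₂ x₁ := by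
        rw [← hfim x₂, hfx2]
        simp [Complex.mul_im, hfim]
      exact hA x₁ x₂ (hSne0 x₁ h1S) (hSne0 x₂ h2S) tt htt hq1 hq2
    have hθx₀ : θ x₀ ∈ K := Set.mem_image_of_mem θ hx₀S
    have hMm : M - m < Real.pi := by
      by_contra hcon
      push_neg at hcon
      have hmem : m + Real.pi ∈ K := by
        apply hKconn.isPreconnected.Icc_subset hmK hMK
        constructor
        · linarith [Real.pi_pos]
        · linarith
      obtain ⟨x₂, hx₂S, hx₂⟩ := hmem
      obtain ⟨x₁, hx₁S, hx₁⟩ := hmK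
      exact hpair x₁ hx₁S x₂ hx₂S (by rw [hx₂, hx₁])
    set ψ : ℝ := (m + M) / 2 with hψdef
    set w : ℂ := c₀ * Complex.exp ((ψ : ℂ) * Complex.I) with hwdef
    have hw0 : w ≠ 0 := mul_ne_zero hc₀ (Complex.exp_ne_zero _)
    have hkey : ∀ v ∈ S, 0 < w.re * q₁ v + w.im * q₂ v := by
      intro v hvS
      set z := f v / c₀ with hzdef
      have hz0 : z ≠ 0 := div_ne_zero (hf0 v (hSne0 v hvS)) hc₀
      have hθm : θ v ∈ K := Set.mem_image_of_mem θ hvS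
      have hm' := hbddb _ hθm
      have hM' := hbdda _ hθm
      have hargθ : z.arg = θ v := rfl
      have hcos : 0 < Real.cos (z.arg - ψ) := by
        apply Real.cos_pos_of_mem_Ioo
        constructor
        · rw [hargθ, hψdef]; linarith
        · rw [hargθ, hψdef]; linarith
      have hfv : f v = z * c₀ := by rw [hzdef]; field_simp
      have e1 := Complex.norm_mul_exp_arg_mul_I z
      have hA' : (starRingEnd ℂ) c₀ * c₀ = ((Complex.normSq c₀ : ℝ) : ℂ) := by
        rw [mul_comm]; exact Complex.mul_conj c₀
      have hconj : (starRingEnd ℂ) ((ψ:ℂ) * Complex.I) = -(ψ:ℂ) * Complex.I := by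
        simp
      have hC : Complex.exp (((z.arg - ψ : ℝ) : ℂ) * Complex.I)
          = Complex.exp ((z.arg : ℂ) * Complex.I) * Complex.exp (-(ψ:ℂ) * Complex.I) := by
        rw [← Complex.exp_add]; congr 1; push_cast; ring
      have hid : (starRingEnd ℂ) w * f v
          = ((Complex.normSq c₀ : ℝ) : ℂ) * ((‖z‖ : ℝ) : ℂ)
            * Complex.exp (((z.arg - ψ : ℝ) : ℂ) * Complex.I) := by
        rw [hwdef, map_mul, hfv, ← Complex.exp_conj, hconj, hC]
        linear_combination Complex.exp (-(ψ:ℂ) * Complex.I)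
          * (z * hA' - ((Complex.normSq c₀ : ℝ) : ℂ) * e1)
      have hre : ((starRingEnd ℂ) w * f v).re
          = Complex.normSq c₀ * (‖z‖ * Real.cos (z.arg - ψ)) := by
        rw [hid, mul_assoc, Complex.re_ofReal_mul, Complex.re_ofReal_mul,
          Complex.exp_ofReal_mul_I_re]
      have hre2 : ((starRingEnd ℂ) w * f v).re = w.re * q₁ v + w.im * q₂ v := by
        simp [Complex.mul_re, Complex.conj_re, Complex.conj_im, hfre, hfim]
        try ring
      rw [← hre2, hre]
      have h1 : 0 < Complex.normSq c₀ := Complex.normSq_pos.mpr hc₀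
      have h2 : 0 < ‖z‖ := norm_pos_iff.mpr hz0
      positivity
    refine ⟨w.re, w.im, ?_, ?_⟩
    · rintro ⟨h1, h2⟩
      apply hw0
      apply Complex.ext <;> simp [h1, h2]
    · intro x hx
      set x' : VV n := ‖x‖⁻¹ • x with hx'def
      have hnx : ‖x‖ ≠ 0 := norm_ne_zero_iff.mpr hx
      have hx'S : x' ∈ S := by
        rw [hSdef, mem_sphere_zero_iff_norm, hx'def, norm_smul]
        simp [Real.norm_eq_abs, abs_of_nonneg (inv_nonneg.mpr (norm_nonneg x)),
          inv_mul_cancel₀ hnx]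
      have hxeq : x = ‖x‖ • x' := by
        rw [hx'def, smul_smul, mul_inv_cancel₀ hnx, one_smul]
      have hq1 : q₁ x = (‖x‖ * ‖x‖) * q₁ x' := by
        conv_lhs => rw [hxeq]
        rw [QuadraticMap.map_smul, smul_eq_mul]
      have hq2 : q₂ x = (‖x‖ * ‖x‖) * q₂ x' := by
        conv_lhs => rw [hxeq]
        rw [QuadraticMap.map_smul, smul_eq_mul]
      have hsph := hkey x' hx'S
      have hn2 : 0 < ‖x‖ * ‖x‖ := by
        have := norm_pos_iff.mpr hx  -- check lemma
        positivity
      rw [hq1, hq2]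
      nlinarith [hsph, hn2]

/-- (Calabi) For `n ≥ 2` and real quadratic forms `q₁, q₂` on `ℝ^{n+1}` with projective
zero sets `Γ₁, Γ₂ ⊆ ℝPⁿ`: `Γ₁ ∩ Γ₂ = ∅` if and only if some nontrivial linear combination
`λ₁ q₁ + λ₂ q₂` is positive definite. -/
theorem calabi (n : ℕ) (hn : 2 ≤ n) (q₁ q₂ : QuadraticForm ℝ (Fin (n + 1) → ℝ)) :
    projZeroSet q₁ ∩ projZeroSet q₂ = ∅ ↔
      ∃ a b : ℝ, ¬(a = 0 ∧ b = 0) ∧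
        ∀ x : Fin (n + 1) → ℝ, x ≠ 0 → 0 < (a • q₁ + b • q₂) x := by
  constructor
  · intro hemp
    have H : ∀ x : Fin (n+1) → ℝ, x ≠ 0 → ¬(q₁ x = 0 ∧ q₂ x = 0) := by
      rintro x hx ⟨h1, h2⟩
      obtain ⟨u, hu⟩ := Projectivization.exists_smul_eq_mk_rep (K := ℝ) x hx
      have hmem : Projectivization.mk ℝ x hx ∈ projZeroSet q₁ ∩ projZeroSet q₂ := by
        constructor
        · show q₁ (Projectivization.mk ℝ x hx).rep = 0
          rw [← hu, Units.smul_def, QuadraticMap.map_smul, h1]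
          simp
        · show q₂ (Projectivization.mk ℝ x hx).rep = 0
          rw [← hu, Units.smul_def, QuadraticMap.map_smul, h2]
          simp
      rw [hemp] at hmem
      exact hmem
    obtain ⟨a, b, hab, hpos⟩ := main_construct hn q₁ q₂ H
    refine ⟨a, b, hab, ?_⟩
    intro x hx
    have := hpos x hx
    simpa [QuadraticMap.add_apply, QuadraticMap.smul_apply, smul_eq_mul] using this
  · rintro ⟨a, b, hab, hpos⟩
    rw [Set.eq_empty_iff_forall_notMem]
    rintro p ⟨h1, h2⟩
    have hx := p.rep_nonzero
    have hlt := hpos p.rep hx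
    have h1' : q₁ p.rep = 0 := h1
    have h2' : q₂ p.rep = 0 := h2
    rw [QuadraticMap.add_apply, QuadraticMap.smul_apply, QuadraticMap.smul_apply,
      h1', h2'] at hlt
    simp at hlt
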